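/- Let q be either the diagonal form d_{[a,c]} = ax² + cy² with a > 0 > c (and set w = 0), or the form d̃_{[a,c]} = ax² + axy + cy² with a > 0 and a > 4c (and set w = 1); let G be its even Gram matrix and d > 0 its discriminant. Then the involution a' = !![1, w; 0, −1] satisfies det a' = −1 and (a')ᵀ G a' = G, and a' maps each connected component of the light cone {v ∈ ℝ² : vᵀ G v > 0} onto itself. If moreover q is primitive and d is not a perfect square, then the set of automorphs of q mapping a fixed component C onto itself is exactly { u^k : k ∈ ℤ } ∪ { a'·u^k : k ∈ ℤ }. -/

import Mathlib

open Matrix Set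

noncomputable section AuxBQF

def Cp (a b d : ℤ) : Set (Fin 2 → ℝ) :=
  {v | Real.sqrt d * |v 1| < 2*(a:ℝ)*v 0 + (b:ℝ)*v 1}

def Cm (a b d : ℤ) : Set (Fin 2 → ℝ) := {v | -v ∈ Cp a b d}

def LC (a b c : ℤ) : Set (Fin 2 → ℝ) :=
  {v | 0 < v ⬝ᵥ (((!![2*a, b; b, 2*c] : Matrix (Fin 2) (Fin 2) ℤ).map
      (Int.cast : ℤ → ℝ)).mulVec v)}

theorem mem_lc (a b c d : ℤ) (ha : 0 < a) (hd : d = b^2-4*a*c) (v : Fin 2 → ℝ) :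
    v ∈ LC a b c ↔ (d:ℝ) * (v 1)^2 < (2*(a:ℝ)*v 0 + (b:ℝ)*v 1)^2 := by
  have haR : (0:ℝ) < (a:ℝ) := by exact_mod_cast ha
  have hdR : (d:ℝ) = (b:ℝ)^2 - 4*(a:ℝ)*(c:ℝ) := by exact_mod_cast hd
  have e00 : (!![2*a, b; b, 2*c] : Matrix (Fin 2) (Fin 2) ℤ) 0 0 = 2*a := rfl
  have e01 : (!![2*a, b; b, 2*c] : Matrix (Fin 2) (Fin 2) ℤ) 0 1 = b := rfl
  have e10 : (!![2*a, b; b, 2*c] : Matrix (Fin 2) (Fin 2) ℤ) 1 0 = b := rfl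
  have e11 : (!![2*a, b; b, 2*c] : Matrix (Fin 2) (Fin 2) ℤ) 1 1 = 2*c := rfl
  simp only [LC, mem_setOf_eq, Matrix.mulVec, dotProduct, Fin.sum_univ_two,
    Matrix.map_apply, e00, e01, e10, e11]
  push_cast
  constructor <;> intro h <;> nlinarith [h, haR, sq_nonneg (v 0), sq_nonneg (v 1)]

theorem lc_eq_union (a b c d : ℤ) (ha : 0 < a) (hd : d = b^2-4*a*c) (hd0 : 0 < d) :
    LC a b c = Cp a b d ∪ Cm a b d := by
  ext v
  rw [mem_lc a b c d ha hd v]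
  have hd0R : (0:ℝ) ≤ (d:ℝ) := by positivity
  have hsq : (d:ℝ) * (v 1)^2 = (Real.sqrt d * |v 1|)^2 := by
    rw [mul_pow, Real.sq_sqrt hd0R, sq_abs]
  rw [hsq]
  constructor
  · intro h
    have h2 : abs (Real.sqrt d * |v 1|) < abs (2*(a:ℝ)*v 0 + (b:ℝ)*v 1) := sq_lt_sq.mp h
    rw [abs_of_nonneg (by positivity)] at h2
    rcases lt_abs.mp h2 with h3 | h3
    · exact Or.inl h3
    · refine Or.inr ?_
      show Real.sqrt d * |(-v) 1| < 2*(a:ℝ)*(-v) 0 + (b:ℝ)*(-v) 1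
      simp only [Pi.neg_apply, abs_neg]
      linarith
  · intro h
    rcases h with h | h
    · simp only [Cp, mem_setOf_eq] at h
      have h0 : 0 ≤ Real.sqrt d * |v 1| := by positivity
      nlinarith
    · have h' : Real.sqrt d * |v 1| < -(2*(a:ℝ)*v 0 + (b:ℝ)*v 1) := by
        have := h; simp only [Cp, Cm, mem_setOf_eq, Pi.neg_apply, abs_neg] at this
        linarith
      have h0 : 0 ≤ Real.sqrt d * |v 1| := by positivity
      nlinarith


theorem combo_lt {t s p P q Q : ℝ} (ht : 0 ≤ t) (hs : 0 ≤ s) (hts : t + s = 1)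
    (h1 : p < P) (h2 : q < Q) : t*p + s*q < t*P + s*Q := by
  rcases eq_or_lt_of_le ht with h | h
  · have hs1 : s = 1 := by linarith
    simp [← h, hs1]; linarith
  · have h3 : t*p < t*P := by nlinarith
    have h4 : s*q ≤ s*Q := by nlinarith
    linarith

theorem Cp_open (a b d : ℤ) : IsOpen (Cp a b d) := by
  apply isOpen_lt
  · exact continuous_const.mul (continuous_apply 1).abs
  · exact (continuous_const.mul (continuous_apply 0)).add
      (continuous_const.mul (continuous_apply 1))

theorem Cm_open (a b d : ℤ) : IsOpen (Cm a b d) :=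
  (Cp_open a b d).preimage continuous_neg

theorem Cp_convex (a b d : ℤ) : Convex ℝ (Cp a b d) := by
  intro x hx y hy t s ht hs hts
  simp only [Cp, mem_setOf_eq] at hx hy ⊢
  have h0 : 0 ≤ Real.sqrt d := Real.sqrt_nonneg _
  have habs : |(t • x + s • y) 1| ≤ t * |x 1| + s * |y 1| := by
    simp only [Pi.add_apply, Pi.smul_apply, smul_eq_mul]
    calc |t * x 1 + s * y 1| ≤ |t * x 1| + |s * y 1| := abs_add_le _ _
      _ = t * |x 1| + s * |y 1| := by
          rw [abs_mul, abs_mul, abs_of_nonneg ht, abs_of_nonneg hs]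
  have hc := combo_lt ht hs hts hx hy
  have h2 : Real.sqrt d * |(t • x + s • y) 1| ≤
      t * (Real.sqrt d * |x 1|) + s * (Real.sqrt d * |y 1|) := by
    calc Real.sqrt d * |(t • x + s • y) 1| ≤ Real.sqrt d * (t * |x 1| + s * |y 1|) :=
          mul_le_mul_of_nonneg_left habs h0
      _ = t * (Real.sqrt d * |x 1|) + s * (Real.sqrt d * |y 1|) := by ring
  refine lt_of_le_of_lt h2 (lt_of_lt_of_le hc (le_of_eq ?_))
  simp only [Pi.add_apply, Pi.smul_apply, smul_eq_mul]; ring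

theorem Cm_convex (a b d : ℤ) : Convex ℝ (Cm a b d) := by
  intro x hx y hy t s ht hs hts
  have h1 : t • (-x) + s • (-y) ∈ Cp a b d := Cp_convex a b d hx hy ht hs hts
  show -(t • x + s • y) ∈ Cp a b d
  have e : -(t • x + s • y) = t • -x + s • -y := by ext i; simp; ring
  rw [e]; exact h1

theorem Cp_Cm_disjoint (a b d : ℤ) : Disjoint (Cp a b d) (Cm a b d) := by
  rw [Set.disjoint_left]
  intro v hv hv'
  simp only [Cp, Cm, mem_setOf_eq, Pi.neg_apply, abs_neg] at hv hv'
  have h0 : 0 ≤ Real.sqrt d * |v 1| := by positivity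
  linarith

theorem comp_eq_Cp (a b c d : ℤ) (ha : 0 < a) (hd : d = b^2-4*a*c) (hd0 : 0 < d)
    (v : Fin 2 → ℝ) (hv : v ∈ Cp a b d) :
    connectedComponentIn (LC a b c) v = Cp a b d := by
  have hu := lc_eq_union a b c d ha hd hd0
  have hvlc : v ∈ LC a b c := by rw [hu]; exact Or.inl hv
  apply Subset.antisymm
  · exact isPreconnected_connectedComponentIn.subset_left_of_subset_union
      (Cp_open a b d) (Cm_open a b d) (Cp_Cm_disjoint a b d)
      (by rw [← hu]; exact connectedComponentIn_subset _ _)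
      ⟨v, mem_connectedComponentIn hvlc, hv⟩
  · exact (Cp_convex a b d).isPreconnected.subset_connectedComponentIn hv
      (by rw [hu]; exact subset_union_left)

theorem comp_eq_Cm (a b c d : ℤ) (ha : 0 < a) (hd : d = b^2-4*a*c) (hd0 : 0 < d)
    (v : Fin 2 → ℝ) (hv : v ∈ Cm a b d) :
    connectedComponentIn (LC a b c) v = Cm a b d := by
  have hu := lc_eq_union a b c d ha hd hd0
  have hvlc : v ∈ LC a b c := by rw [hu]; exact Or.inr hv
  apply Subset.antisymm
  · exact isPreconnected_connectedComponentIn.subset_left_of_subset_union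
      (Cm_open a b d) (Cp_open a b d) (Cp_Cm_disjoint a b d).symm
      (by rw [union_comm, ← hu]; exact connectedComponentIn_subset _ _)
      ⟨v, mem_connectedComponentIn hvlc, hv⟩
  · exact (Cm_convex a b d).isPreconnected.subset_connectedComponentIn hv
      (by rw [hu]; exact subset_union_right)

def phi (M : Matrix (Fin 2) (Fin 2) ℤ) : (Fin 2 → ℝ) → (Fin 2 → ℝ) :=
  (M.map (Int.cast : ℤ → ℝ)).mulVec

theorem phi_apply (M : Matrix (Fin 2) (Fin 2) ℤ) (v : Fin 2 → ℝ) :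
    phi M v = ![(M 0 0 : ℝ)*v 0 + (M 0 1 : ℝ)*v 1,
                (M 1 0 : ℝ)*v 0 + (M 1 1 : ℝ)*v 1] := by
  funext i
  fin_cases i <;>
    simp [phi, Matrix.mulVec, dotProduct, Fin.sum_univ_two]

theorem phi_mul (M N : Matrix (Fin 2) (Fin 2) ℤ) (v : Fin 2 → ℝ) :
    phi (M*N) v = phi M (phi N v) := by
  rw [phi_apply, phi_apply, phi_apply]
  have e : ∀ i j, (M*N) i j = M i 0 * N 0 j + M i 1 * N 1 j := by
    intro i j; rw [Matrix.mul_apply, Fin.sum_univ_two]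
  funext i
  fin_cases i <;> simp [e] <;> push_cast <;> ring

theorem phi_one (v : Fin 2 → ℝ) : phi 1 v = v := by
  funext i
  rw [phi_apply]
  fin_cases i <;> simp [Matrix.one_apply]

theorem phi_neg (M : Matrix (Fin 2) (Fin 2) ℤ) (v : Fin 2 → ℝ) :
    phi M (-v) = -(phi M v) := by
  rw [phi_apply, phi_apply]
  funext i
  fin_cases i <;> simp <;> ring

theorem phi_continuous (M : Matrix (Fin 2) (Fin 2) ℤ) : Continuous (phi M) :=
  LinearMap.continuous_of_finiteDimensional ((M.map (Int.cast : ℤ → ℝ)).mulVecLin)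

theorem aut_equations (a b c : ℤ) (M : Matrix (Fin 2) (Fin 2) ℤ)
    (hM : Mᵀ * !![2*a, b; b, 2*c] * M = !![2*a, b; b, 2*c]) :
    (a*(M 0 0)^2 + b*(M 0 0)*(M 1 0) + c*(M 1 0)^2 = a) ∧
    (2*a*(M 0 0)*(M 0 1) + b*((M 0 0)*(M 1 1)+(M 0 1)*(M 1 0)) + 2*c*(M 1 0)*(M 1 1) = b) ∧
    (a*(M 0 1)^2 + b*(M 0 1)*(M 1 1) + c*(M 1 1)^2 = c) := by
  have h00 := congrFun (congrFun hM 0) 0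
  have h01 := congrFun (congrFun hM 0) 1
  have h11 := congrFun (congrFun hM 1) 1
  have e00 : (!![2*a, b; b, 2*c] : Matrix (Fin 2) (Fin 2) ℤ) 0 0 = 2*a := rfl
  have e01 : (!![2*a, b; b, 2*c] : Matrix (Fin 2) (Fin 2) ℤ) 0 1 = b := rfl
  have e10 : (!![2*a, b; b, 2*c] : Matrix (Fin 2) (Fin 2) ℤ) 1 0 = b := rfl
  have e11 : (!![2*a, b; b, 2*c] : Matrix (Fin 2) (Fin 2) ℤ) 1 1 = 2*c := rfl
  simp only [Matrix.mul_apply, Fin.sum_univ_two, Matrix.transpose_apply,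
    e00, e01, e10, e11] at h00 h01 h11
  refine ⟨by linarith, by linarith, by linarith⟩

theorem aut_maps_lc (a b c : ℤ) (M : Matrix (Fin 2) (Fin 2) ℤ)
    (hM : Mᵀ * !![2*a, b; b, 2*c] * M = !![2*a, b; b, 2*c])
    (v : Fin 2 → ℝ) (hv : v ∈ LC a b c) : phi M v ∈ LC a b c := by
  obtain ⟨E00, E01, E11⟩ := aut_equations a b c M hM
  have E00R : (a:ℝ)*(M 0 0 : ℝ)^2 + (b:ℝ)*(M 0 0 : ℝ)*(M 1 0 : ℝ)
      + (c:ℝ)*(M 1 0 : ℝ)^2 = a := by exact_mod_cast E00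
  have E01R : 2*(a:ℝ)*(M 0 0:ℝ)*(M 0 1:ℝ)
      + (b:ℝ)*((M 0 0:ℝ)*(M 1 1:ℝ)+(M 0 1:ℝ)*(M 1 0:ℝ))
      + 2*(c:ℝ)*(M 1 0:ℝ)*(M 1 1:ℝ) = b := by exact_mod_cast E01
  have E11R : (a:ℝ)*(M 0 1:ℝ)^2 + (b:ℝ)*(M 0 1:ℝ)*(M 1 1:ℝ)
      + (c:ℝ)*(M 1 1:ℝ)^2 = c := by exact_mod_cast E11
  have e00 : (!![2*a, b; b, 2*c] : Matrix (Fin 2) (Fin 2) ℤ) 0 0 = 2*a := rfl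
  have e01 : (!![2*a, b; b, 2*c] : Matrix (Fin 2) (Fin 2) ℤ) 0 1 = b := rfl
  have e10 : (!![2*a, b; b, 2*c] : Matrix (Fin 2) (Fin 2) ℤ) 1 0 = b := rfl
  have e11 : (!![2*a, b; b, 2*c] : Matrix (Fin 2) (Fin 2) ℤ) 1 1 = 2*c := rfl
  have key : (phi M v) ⬝ᵥ (((!![2*a, b; b, 2*c] : Matrix (Fin 2) (Fin 2) ℤ).map
      (Int.cast : ℤ → ℝ)).mulVec (phi M v)) =
      v ⬝ᵥ (((!![2*a, b; b, 2*c] : Matrix (Fin 2) (Fin 2) ℤ).map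
      (Int.cast : ℤ → ℝ)).mulVec v) := by
    rw [phi_apply]
    simp only [Matrix.mulVec, dotProduct, Fin.sum_univ_two, Matrix.map_apply,
      e00, e01, e10, e11, Matrix.cons_val_zero, Matrix.cons_val_one, Matrix.head_cons]
    push_cast
    linear_combination 2*(v 0)^2 * E00R + 2*(v 0)*(v 1) * E01R + 2*(v 1)^2 * E11R
  simp only [LC, mem_setOf_eq] at hv ⊢
  rw [key]; exact hv

theorem e0_mem_Cp (a b d : ℤ) (ha : 0 < a) : ![1,0] ∈ Cp a b d := by
  have : (0:ℝ) < 2*(a:ℝ) := by exact_mod_cast (by linarith : (0:ℤ) < 2*a)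
  simp [Cp]
  linarith

theorem mem_Cp_of_pos (a b c d : ℤ) (ha : 0 < a) (hd : d = b^2-4*a*c) (hd0 : 0 < d)
    (x : Fin 2 → ℝ) (hx : x ∈ LC a b c) (hL : 0 < 2*(a:ℝ)*x 0 + (b:ℝ)*x 1) :
    x ∈ Cp a b d := by
  rw [lc_eq_union a b c d ha hd hd0] at hx
  rcases hx with h | h
  · exact h
  · exfalso
    simp only [Cp, Cm, mem_setOf_eq, Pi.neg_apply, abs_neg] at h
    have h0 : 0 ≤ Real.sqrt d * |x 1| := by positivity
    linarith

theorem mem_Cm_of_neg (a b c d : ℤ) (ha : 0 < a) (hd : d = b^2-4*a*c) (hd0 : 0 < d)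
    (x : Fin 2 → ℝ) (hx : x ∈ LC a b c) (hL : 2*(a:ℝ)*x 0 + (b:ℝ)*x 1 < 0) :
    x ∈ Cm a b d := by
  rw [lc_eq_union a b c d ha hd hd0] at hx
  rcases hx with h | h
  · exfalso
    simp only [Cp, mem_setOf_eq] at h
    have h0 : 0 ≤ Real.sqrt d * |x 1| := by positivity
    linarith
  · exact h

theorem phi_e0 (M : Matrix (Fin 2) (Fin 2) ℤ) :
    phi M ![1,0] = ![(M 0 0 : ℝ), (M 1 0 : ℝ)] := by
  rw [phi_apply]
  funext i; fin_cases i <;> simp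

theorem e0_mem_lc (a b c d : ℤ) (ha : 0 < a) (hd : d = b^2-4*a*c) (hd0 : 0 < d) :
    ![1,0] ∈ LC a b c := by
  rw [lc_eq_union a b c d ha hd hd0]; exact Or.inl (e0_mem_Cp a b d ha)

theorem sign_lemma (a b c d : ℤ) (ha : 0 < a) (hd : d = b^2-4*a*c) (hd0 : 0 < d)
    (M : Matrix (Fin 2) (Fin 2) ℤ)
    (hM : Mᵀ * !![2*a, b; b, 2*c] * M = !![2*a, b; b, 2*c]) :
    0 < 2*a*(M 0 0) + b*(M 1 0) ∨ 2*a*(M 0 0) + b*(M 1 0) < 0 := by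
  have h1 : phi M ![1,0] ∈ LC a b c :=
    aut_maps_lc a b c M hM _ (e0_mem_lc a b c d ha hd hd0)
  rw [lc_eq_union a b c d ha hd hd0, phi_e0] at h1
  rcases h1 with h | h
  · left
    simp only [Cp, mem_setOf_eq, Matrix.cons_val_zero, Matrix.cons_val_one,
      Matrix.head_cons] at h
    have h0 : 0 ≤ Real.sqrt d * |(M 1 0 : ℝ)| := by positivity
    have : (0:ℝ) < 2*(a:ℝ)*(M 0 0:ℝ) + (b:ℝ)*(M 1 0:ℝ) := by linarith
    exact_mod_cast this
  · right
    simp only [Cp, Cm, mem_setOf_eq, Pi.neg_apply, abs_neg, Matrix.cons_val_zero,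
      Matrix.cons_val_one, Matrix.head_cons] at h
    have h0 : 0 ≤ Real.sqrt d * |(M 1 0 : ℝ)| := by positivity
    have : 2*(a:ℝ)*(M 0 0:ℝ) + (b:ℝ)*(M 1 0:ℝ) < 0 := by linarith
    exact_mod_cast this

theorem image_Cp_subset (a b c d : ℤ) (ha : 0 < a) (hd : d = b^2-4*a*c) (hd0 : 0 < d)
    (M : Matrix (Fin 2) (Fin 2) ℤ)
    (hM : Mᵀ * !![2*a, b; b, 2*c] * M = !![2*a, b; b, 2*c])
    (hL : 0 < 2*a*(M 0 0) + b*(M 1 0)) :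
    phi M '' Cp a b d ⊆ Cp a b d := by
  have hLR : (0:ℝ) < 2*(a:ℝ)*(M 0 0:ℝ) + (b:ℝ)*(M 1 0:ℝ) := by exact_mod_cast hL
  refine IsPreconnected.subset_left_of_subset_union (Cp_open a b d) (Cm_open a b d)
    (Cp_Cm_disjoint a b d) ?_ ?_ ?_
  · intro x hx
    obtain ⟨y, hy, rfl⟩ := hx
    rw [← lc_eq_union a b c d ha hd hd0]
    exact aut_maps_lc a b c M hM y
      (by rw [lc_eq_union a b c d ha hd hd0]; exact Or.inl hy)
  · refine ⟨phi M ![1,0], mem_image_of_mem _ (e0_mem_Cp a b d ha), ?_⟩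
    refine mem_Cp_of_pos a b c d ha hd hd0 _
      (aut_maps_lc a b c M hM _ (e0_mem_lc a b c d ha hd hd0)) ?_
    rw [phi_e0]
    simpa using hLR
  · exact ((Cp_convex a b d).isPreconnected).image (phi M)
      (phi_continuous M).continuousOn

theorem image_Cp_subset_Cm (a b c d : ℤ) (ha : 0 < a) (hd : d = b^2-4*a*c) (hd0 : 0 < d)
    (M : Matrix (Fin 2) (Fin 2) ℤ)
    (hM : Mᵀ * !![2*a, b; b, 2*c] * M = !![2*a, b; b, 2*c])
    (hL : 2*a*(M 0 0) + b*(M 1 0) < 0) :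
    phi M '' Cp a b d ⊆ Cm a b d := by
  have hLR : 2*(a:ℝ)*(M 0 0:ℝ) + (b:ℝ)*(M 1 0:ℝ) < 0 := by exact_mod_cast hL
  refine IsPreconnected.subset_left_of_subset_union (Cm_open a b d) (Cp_open a b d)
    (Cp_Cm_disjoint a b d).symm ?_ ?_ ?_
  · intro x hx
    obtain ⟨y, hy, rfl⟩ := hx
    rw [union_comm, ← lc_eq_union a b c d ha hd hd0]
    exact aut_maps_lc a b c M hM y
      (by rw [lc_eq_union a b c d ha hd hd0]; exact Or.inl hy)
  · refine ⟨phi M ![1,0], mem_image_of_mem _ (e0_mem_Cp a b d ha), ?_⟩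
    refine mem_Cm_of_neg a b c d ha hd hd0 _
      (aut_maps_lc a b c M hM _ (e0_mem_lc a b c d ha hd hd0)) ?_
    rw [phi_e0]
    simpa using hLR
  · exact ((Cp_convex a b d).isPreconnected).image (phi M)
      (phi_continuous M).continuousOn

theorem image_Cm_of_Cp (a b d : ℤ) (M : Matrix (Fin 2) (Fin 2) ℤ)
    (h : phi M '' Cp a b d ⊆ Cp a b d) : phi M '' Cm a b d ⊆ Cm a b d := by
  rintro x ⟨y, hy, rfl⟩
  show -(phi M y) ∈ Cp a b d
  rw [← phi_neg]
  exact h (mem_image_of_mem _ hy)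

theorem image_Cm_of_Cp' (a b d : ℤ) (M : Matrix (Fin 2) (Fin 2) ℤ)
    (h : phi M '' Cp a b d ⊆ Cm a b d) : phi M '' Cm a b d ⊆ Cp a b d := by
  rintro x ⟨y, hy, rfl⟩
  have h2 : phi M (-y) ∈ Cm a b d := h (mem_image_of_mem _ hy)
  have h3 : -(phi M (-y)) ∈ Cp a b d := h2
  rwa [phi_neg, neg_neg] at h3

theorem aut_of_inv (a b c : ℤ) (M N : Matrix (Fin 2) (Fin 2) ℤ)
    (hM : Mᵀ * !![2*a, b; b, 2*c] * M = !![2*a, b; b, 2*c])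
    (hMN : M * N = 1) :
    Nᵀ * !![2*a, b; b, 2*c] * N = !![2*a, b; b, 2*c] := by
  have h1 : (M*N)ᵀ * !![2*a, b; b, 2*c] * (M*N) = Nᵀ * (Mᵀ * !![2*a, b; b, 2*c] * M) * N := by
    rw [Matrix.transpose_mul]
    simp only [Matrix.mul_assoc]
  rw [hMN, hM] at h1
  simpa using h1.symm

theorem not_Cp_subset_Cm (a b d : ℤ) (ha : 0 < a) : ¬ (Cp a b d ⊆ Cm a b d) := by
  intro h
  exact Set.disjoint_left.mp (Cp_Cm_disjoint a b d)
    (e0_mem_Cp a b d ha) (h (e0_mem_Cp a b d ha))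

theorem master (a b c d : ℤ) (ha : 0 < a) (hd : d = b^2-4*a*c) (hd0 : 0 < d)
    (M N : Matrix (Fin 2) (Fin 2) ℤ)
    (hM : Mᵀ * !![2*a, b; b, 2*c] * M = !![2*a, b; b, 2*c])
    (hMN : M * N = 1) (hNM : N * M = 1) :
    (0 < 2*a*(M 0 0) + b*(M 1 0) ∧ phi M '' Cp a b d = Cp a b d ∧
      phi M '' Cm a b d = Cm a b d) ∨
    (2*a*(M 0 0) + b*(M 1 0) < 0 ∧ phi M '' Cp a b d = Cm a b d ∧
      phi M '' Cm a b d = Cp a b d) := by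
  have hN : Nᵀ * !![2*a, b; b, 2*c] * N = !![2*a, b; b, 2*c] :=
    aut_of_inv a b c M N hM hMN
  have hid : ∀ x : Fin 2 → ℝ, phi M (phi N x) = x := by
    intro x; rw [← phi_mul, hMN, phi_one]
  rcases sign_lemma a b c d ha hd hd0 M hM with hLM | hLM
  · left
    have hCp : phi M '' Cp a b d ⊆ Cp a b d :=
      image_Cp_subset a b c d ha hd hd0 M hM hLM
    have hCm : phi M '' Cm a b d ⊆ Cm a b d := image_Cm_of_Cp a b d M hCp
    rcases sign_lemma a b c d ha hd hd0 N hN with hLN | hLN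
    · have hNCp : phi N '' Cp a b d ⊆ Cp a b d :=
        image_Cp_subset a b c d ha hd hd0 N hN hLN
      have hNCm : phi N '' Cm a b d ⊆ Cm a b d := image_Cm_of_Cp a b d N hNCp
      refine ⟨hLM, Subset.antisymm hCp ?_, Subset.antisymm hCm ?_⟩
      · intro x hx
        exact ⟨phi N x, hNCp (mem_image_of_mem _ hx), hid x⟩
      · intro x hx
        exact ⟨phi N x, hNCm (mem_image_of_mem _ hx), hid x⟩
    · exfalso
      apply not_Cp_subset_Cm a b d ha
      intro x hx
      have h1 : phi N x ∈ Cm a b d :=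
        image_Cp_subset_Cm a b c d ha hd hd0 N hN hLN (mem_image_of_mem _ hx)
      have h2 : phi M (phi N x) ∈ Cm a b d := hCm (mem_image_of_mem _ h1)
      rwa [hid x] at h2
  · right
    have hCp : phi M '' Cp a b d ⊆ Cm a b d :=
      image_Cp_subset_Cm a b c d ha hd hd0 M hM hLM
    have hCm : phi M '' Cm a b d ⊆ Cp a b d := image_Cm_of_Cp' a b d M hCp
    rcases sign_lemma a b c d ha hd hd0 N hN with hLN | hLN
    · exfalso
      apply not_Cp_subset_Cm a b d ha
      intro x hx
      have h1 : phi N x ∈ Cp a b d :=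
        image_Cp_subset a b c d ha hd hd0 N hN hLN (mem_image_of_mem _ hx)
      have h2 : phi M (phi N x) ∈ Cm a b d := hCp (mem_image_of_mem _ h1)
      rwa [hid x] at h2
    · have hNCp : phi N '' Cp a b d ⊆ Cm a b d :=
        image_Cp_subset_Cm a b c d ha hd hd0 N hN hLN
      have hNCm : phi N '' Cm a b d ⊆ Cp a b d := image_Cm_of_Cp' a b d N hNCp
      refine ⟨hLM, Subset.antisymm hCp ?_, Subset.antisymm hCm ?_⟩
      · intro x hx
        exact ⟨phi N x, hNCm (mem_image_of_mem _ hx), hid x⟩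
      · intro x hx
        exact ⟨phi N x, hNCp (mem_image_of_mem _ hx), hid x⟩

end AuxBQF


section AuxPell

def mOf (a b c m v : ℤ) : Matrix (Fin 2) (Fin 2) ℤ := !![m, -c*v; a*v, m + b*v]

theorem mOf_mul (a b c m1 v1 m2 v2 : ℤ) :
    mOf a b c m1 v1 * mOf a b c m2 v2 =
      mOf a b c (m1*m2 - a*c*v1*v2) (m1*v2 + m2*v1 + b*v1*v2) := by
  ext i j
  rw [Matrix.mul_apply, Fin.sum_univ_two]
  fin_cases i <;> fin_cases j <;> simp [mOf] <;> ring

theorem mOf_one (a b c : ℤ) : mOf a b c 1 0 = 1 := by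
  ext i j
  fin_cases i <;> fin_cases j <;> simp [mOf, Matrix.one_apply]

theorem mOf_aut (a b c m v : ℤ) (hD : m^2 + b*m*v + a*c*v^2 = 1) :
    (mOf a b c m v)ᵀ * !![2*a, b; b, 2*c] * mOf a b c m v = !![2*a, b; b, 2*c] := by
  ext i j
  simp only [Matrix.mul_apply, Fin.sum_univ_two, Matrix.transpose_apply]
  fin_cases i <;> fin_cases j <;> simp [mOf] <;>
    first
      | linear_combination (2*a) * hD
      | linear_combination (-(2*a)) * hD
      | linear_combination b * hD
      | linear_combination (-b) * hD
      | linear_combination (2*c) * hD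
      | linear_combination (-(2*c)) * hD

theorem sq_le_sq_of (x y : ℤ) (hx : 0 < x) (hy : 0 < y) (h : x^2 ≤ y^2) : x ≤ y := by
  nlinarith [sq_nonneg (x - y), sq_nonneg (x + y)]

theorem sq_lt_sq_of (x y : ℤ) (hx : 0 ≤ x) (hy : 0 < y) (h : x^2 < y^2) : x < y := by
  nlinarith [sq_nonneg (x - y), sq_nonneg (x + y)]

/-- descent, nonnegative `v` case -/
theorem descent_nonneg (a b c d : ℤ) (ha : 0 < a) (hd : d = b^2-4*a*c) (hd0 : 0 < d)
    (P V : ℤ) (hV : 0 < V) (hDP : P^2 + b*P*V + a*c*V^2 = 1) (hUpos : 0 < 2*P + b*V)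
    (hmin : ∀ x y : ℤ, 0 < x → 0 < y → x^2 - d*y^2 = 4 → 2*P + b*V ≤ x)
    (u : Matrix.GeneralLinearGroup (Fin 2) ℤ) (hu : (u : Matrix (Fin 2) (Fin 2) ℤ) = mOf a b c P V) :
    ∀ n : ℕ, ∀ m v : ℤ, v.natAbs = n → 0 ≤ v → m^2 + b*m*v + a*c*v^2 = 1 →
      0 < 2*m + b*v → ∃ k : ℤ, mOf a b c m v = ((u^k : Matrix.GeneralLinearGroup (Fin 2) ℤ) :
        Matrix (Fin 2) (Fin 2) ℤ) := by
  intro n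
  induction n using Nat.strong_induction_on with
  | _ n ih =>
    intro m v hn hv0 hD ht
    rcases eq_or_lt_of_le hv0 with hv | hv
    · -- v = 0
      have hv' : v = 0 := hv.symm
      subst hv'
      have hm : m = 1 := by nlinarith
      subst hm
      refine ⟨0, ?_⟩
      rw [zpow_zero, Units.val_one, mOf_one]
    · -- v > 0
      set t := 2*m + b*v with htdef
      set U := 2*P + b*V with hUdef
      have pell_t : t^2 - d*v^2 = 4 := by
        rw [htdef, hd]; linear_combination 4*hD
      have pell_U : U^2 - d*V^2 = 4 := by
        rw [hUdef, hd]; linear_combination 4*hDP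
      have hUt : U ≤ t := hmin t v ht hv pell_t
      have hV2v2 : V^2 ≤ v^2 := by nlinarith
      have hVv : V ≤ v := sq_le_sq_of V v hV hv hV2v2
      have hdV : 1 ≤ d*V^2 := by nlinarith
      have hU3 : 3 ≤ U := by nlinarith [sq_nonneg (U - 2)]
      set m' := m*P + b*m*V + a*c*v*V with hm'def
      set v' := v*P - m*V with hv'def
      have h2v' : 2*v' = v*U - t*V := by rw [hv'def, htdef, hUdef]; ring
      have h2t' : 2*(2*m' + b*v') = t*U - d*v*V := by
        rw [hm'def, hv'def, htdef, hUdef, hd]; ring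
      -- v' ≥ 0
      have hsq1 : (v*U)^2 - (t*V)^2 = 4*(v^2 - V^2) := by
        linear_combination v^2 * pell_U - V^2 * pell_t
      have htV : t*V ≤ v*U :=
        sq_le_sq_of (t*V) (v*U) (mul_pos ht hV) (mul_pos hv hUpos) (by linarith)
      have hv'0 : 0 ≤ v' := by linarith
      -- v' < v
      have hsq2 : (t*V)^2 - (v*(U-2))^2 = 4*V^2 + (4*U - 8)*v^2 := by
        linear_combination V^2 * pell_t - v^2 * pell_U
      have hpos1 : (0:ℤ) < V^2 := by positivity
      have hpos2 : (0:ℤ) ≤ (4*U - 8)*v^2 := mul_nonneg (by linarith) (sq_nonneg v)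
      have hlt : v*(U-2) < t*V :=
        sq_lt_sq_of (v*(U-2)) (t*V) (mul_nonneg (le_of_lt hv) (by linarith))
          (mul_pos ht hV) (by linarith)
      have hexp : v*(U-2) = v*U - 2*v := by ring
      have hv'v : v' < v := by linarith
      -- t' > 0
      have hsq3 : (t*U)^2 - (d*v*V)^2 = 16 + 4*d*v^2 + 4*d*V^2 := by
        linear_combination U^2 * pell_t + (d*v^2 + 4) * pell_U
      have hpos3 : (0:ℤ) < d*v^2 := by positivity
      have hpos4 : (0:ℤ) < d*V^2 := by positivity
      have hdvV : d*v*V < t*U :=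
        sq_lt_sq_of (d*v*V) (t*U) (by positivity) (mul_pos ht hUpos) (by linarith)
      have ht' : 0 < 2*m' + b*v' := by linarith
      have hD' : m'^2 + b*m'*v' + a*c*v'^2 = 1 := by
        rw [hm'def, hv'def]
        linear_combination (P^2 + b*P*V + a*c*V^2) * hD + hDP
      obtain ⟨k, hk⟩ := ih v'.natAbs (by omega) m' v' rfl hv'0 hD' ht'
      refine ⟨1 + k, ?_⟩
      have e1 : P*m' - a*c*V*v' = m := by
        rw [hm'def, hv'def]; linear_combination m * hDP
      have e2 : P*v' + m'*V + b*V*v' = v := by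
        rw [hm'def, hv'def]; linear_combination v * hDP
      have hmul : mOf a b c P V * mOf a b c m' v' = mOf a b c m v := by
        rw [mOf_mul, e1, e2]
      rw [_root_.zpow_add, zpow_one, Units.val_mul, hu, ← hk]
      exact hmul.symm

theorem descent (a b c d : ℤ) (ha : 0 < a) (hd : d = b^2-4*a*c) (hd0 : 0 < d)
    (P V : ℤ) (hV : 0 < V) (hDP : P^2 + b*P*V + a*c*V^2 = 1) (hUpos : 0 < 2*P + b*V)
    (hmin : ∀ x y : ℤ, 0 < x → 0 < y → x^2 - d*y^2 = 4 → 2*P + b*V ≤ x)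
    (u : Matrix.GeneralLinearGroup (Fin 2) ℤ) (hu : (u : Matrix (Fin 2) (Fin 2) ℤ) = mOf a b c P V)
    (m v : ℤ) (hD : m^2 + b*m*v + a*c*v^2 = 1) (ht : 0 < 2*m + b*v) :
    ∃ k : ℤ, mOf a b c m v = ((u^k : Matrix.GeneralLinearGroup (Fin 2) ℤ) :
      Matrix (Fin 2) (Fin 2) ℤ) := by
  rcases le_or_gt 0 v with hv0 | hv0
  · exact descent_nonneg a b c d ha hd hd0 P V hV hDP hUpos hmin u hu v.natAbs m v rfl hv0 hD ht
  · have hD2 : (m + b*v)^2 + b*(m + b*v)*(-v) + a*c*(-v)^2 = 1 := by linear_combination hD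
    have ht2 : 0 < 2*(m + b*v) + b*(-v) := by linarith
    obtain ⟨k, hk⟩ := descent_nonneg a b c d ha hd hd0 P V hV hDP hUpos hmin u hu
      (-v).natAbs (m + b*v) (-v) rfl (by linarith) hD2 ht2
    refine ⟨-k, ?_⟩
    have e1 : m*(m + b*v) - a*c*v*(-v) = 1 := by linear_combination hD
    have e2 : m*(-v) + (m + b*v)*v + b*v*(-v) = 0 := by ring
    have hinv : mOf a b c m v * mOf a b c (m + b*v) (-v) = 1 := by
      rw [mOf_mul, e1, e2, mOf_one]
    have huk : (u^k) * (u^(-k)) = 1 := by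
      rw [← _root_.zpow_add]; simp
    have hcoe : ((u^k : Matrix.GeneralLinearGroup (Fin 2) ℤ) : Matrix (Fin 2) (Fin 2) ℤ) *
        ((u^(-k) : Matrix.GeneralLinearGroup (Fin 2) ℤ) : Matrix (Fin 2) (Fin 2) ℤ) = 1 := by
      rw [← Units.val_mul, huk, Units.val_one]
    calc mOf a b c m v = mOf a b c m v * 1 := by rw [mul_one]
      _ = mOf a b c m v * (((u^k : Matrix.GeneralLinearGroup (Fin 2) ℤ) :
            Matrix (Fin 2) (Fin 2) ℤ) * ((u^(-k) : Matrix.GeneralLinearGroup (Fin 2) ℤ) :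
            Matrix (Fin 2) (Fin 2) ℤ)) := by rw [hcoe]
      _ = (mOf a b c m v * mOf a b c (m + b*v) (-v)) *
            ((u^(-k) : Matrix.GeneralLinearGroup (Fin 2) ℤ) :
            Matrix (Fin 2) (Fin 2) ℤ) := by rw [hk, Matrix.mul_assoc]
      _ = ((u^(-k) : Matrix.GeneralLinearGroup (Fin 2) ℤ) :
            Matrix (Fin 2) (Fin 2) ℤ) := by rw [hinv, one_mul]

/-- every det-1 automorph of a primitive form has the standard shape -/
theorem aut_shape (a b c : ℤ) (ha : 0 < a)
    (hprim : Int.gcd a (Int.gcd b c) = 1)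
    (M : Matrix (Fin 2) (Fin 2) ℤ)
    (hM : Mᵀ * !![2*a, b; b, 2*c] * M = !![2*a, b; b, 2*c])
    (hdet : M.det = 1) :
    ∃ m v : ℤ, M = mOf a b c m v ∧ m^2 + b*m*v + a*c*v^2 = 1 := by
  have hdetT : Mᵀ.det = 1 := by rw [Matrix.det_transpose]; exact hdet
  have h1 : (Mᵀ).adjugate * Mᵀ = 1 := by
    rw [Matrix.adjugate_mul, hdetT, one_smul]
  have key : !![2*a, b; b, 2*c] * M = (M.adjugate)ᵀ * !![2*a, b; b, 2*c] := by
    calc !![2*a, b; b, 2*c] * M = ((Mᵀ).adjugate * Mᵀ) * (!![2*a, b; b, 2*c] * M) := by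
          rw [h1, one_mul]
      _ = (Mᵀ).adjugate * (Mᵀ * !![2*a, b; b, 2*c] * M) := by
          simp only [Matrix.mul_assoc]
      _ = (Mᵀ).adjugate * !![2*a, b; b, 2*c] := by rw [hM]
      _ = (M.adjugate)ᵀ * !![2*a, b; b, 2*c] := by rw [Matrix.adjugate_transpose]
  set m := M 0 0 with hm
  set n := M 0 1 with hn
  set g := M 1 0 with hg
  set h := M 1 1 with hh
  have hMeta : M = !![m, n; g, h] := by
    rw [hm, hn, hg, hh]; exact (Matrix.etaExpand_eq M).symm ▸ rfl
  have hdet2 : m*h - n*g = 1 := by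
    have := hdet
    rw [hMeta, Matrix.det_fin_two_of] at this
    linarith
  rw [hMeta, Matrix.adjugate_fin_two] at key
  have r1 : (!![m, n; g, h] : Matrix (Fin 2) (Fin 2) ℤ) 0 0 = m := rfl
  have r2 : (!![m, n; g, h] : Matrix (Fin 2) (Fin 2) ℤ) 0 1 = n := rfl
  have r3 : (!![m, n; g, h] : Matrix (Fin 2) (Fin 2) ℤ) 1 0 = g := rfl
  have r4 : (!![m, n; g, h] : Matrix (Fin 2) (Fin 2) ℤ) 1 1 = h := rfl
  rw [r1, r2, r3, r4] at key
  have s1 : (!![2*a, b; b, 2*c] : Matrix (Fin 2) (Fin 2) ℤ) 0 0 = 2*a := rfl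
  have s2 : (!![2*a, b; b, 2*c] : Matrix (Fin 2) (Fin 2) ℤ) 0 1 = b := rfl
  have s3 : (!![2*a, b; b, 2*c] : Matrix (Fin 2) (Fin 2) ℤ) 1 0 = b := rfl
  have s4 : (!![2*a, b; b, 2*c] : Matrix (Fin 2) (Fin 2) ℤ) 1 1 = 2*c := rfl
  have t1 : (!![h, -n; -g, m] : Matrix (Fin 2) (Fin 2) ℤ) 0 0 = h := rfl
  have t2 : (!![h, -n; -g, m] : Matrix (Fin 2) (Fin 2) ℤ) 0 1 = -n := rfl
  have t3 : (!![h, -n; -g, m] : Matrix (Fin 2) (Fin 2) ℤ) 1 0 = -g := rfl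
  have t4 : (!![h, -n; -g, m] : Matrix (Fin 2) (Fin 2) ℤ) 1 1 = m := rfl
  have k00 := congrFun (congrFun key 0) 0
  have k01 := congrFun (congrFun key 0) 1
  have k10 := congrFun (congrFun key 1) 0
  simp only [Matrix.mul_apply, Fin.sum_univ_two, Matrix.transpose_apply,
    r1, r2, r3, r4, s1, s2, s3, s4, t1, t2, t3, t4] at k00 k01 k10
  -- k01 : 2*a*n + b*h = b*h - 2*c*g  (or similar); derive a*n = -c*g and a*(h-m) = b*g
  have lin1 : a*n = -(c*g) := by linarith
  have lin2 : a*(h - m) = b*g := by linarith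
  -- a divides g
  have hdvd1 : a ∣ b*g := ⟨h - m, by linarith⟩
  have hdvd2 : a ∣ c*g := ⟨-n, by linarith⟩
  have hcop : IsCoprime a ((Int.gcd b c : ℤ)) := by
    rw [Int.isCoprime_iff_gcd_eq_one]
    exact_mod_cast hprim
  have hdvd3 : a ∣ g * (Int.gcd b c : ℤ) := by
    rw [Int.gcd_eq_gcd_ab b c]
    have : g * (b * Int.gcdA b c + c * Int.gcdB b c) =
        (b*g) * Int.gcdA b c + (c*g) * Int.gcdB b c := by ring
    rw [this]
    exact dvd_add (Dvd.dvd.mul_right hdvd1 _) (Dvd.dvd.mul_right hdvd2 _)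
  have hdvdg : a ∣ g := (IsCoprime.dvd_of_dvd_mul_right hcop hdvd3)
  obtain ⟨v, hv⟩ := hdvdg
  have hane : (a:ℤ) ≠ 0 := by linarith
  have hnv : n = -(c*v) := by
    apply mul_left_cancel₀ hane
    rw [lin1, hv]; ring
  have hhv : h = m + b*v := by
    have : a*(h - m) = a*(b*v) := by rw [lin2, hv]; ring
    have := mul_left_cancel₀ hane this
    linarith
  refine ⟨m, v, ?_, ?_⟩
  · rw [hMeta, hnv, hhv, hv]
    ext i j
    fin_cases i <;> fin_cases j <;> simp [mOf] <;> ring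
  · have : m*(m + b*v) - (-(c*v))*(a*v) = 1 := by
      rw [← hnv, ← hhv]
      have : g = a*v := hv
      rw [← this]; exact hdet2
    linarith [this]

end AuxPell

noncomputable section Glue
open Matrix Set

theorem CpneCm (a b d : ℤ) (ha : 0 < a) : Cp a b d ≠ Cm a b d := by
  intro h
  exact not_Cp_subset_Cm a b d ha (h ▸ subset_rfl)

theorem autA (a b c w : ℤ)
    (hcase : (b = 0 ∧ w = 0 ∧ 0 < a ∧ c < 0) ∨ (b = a ∧ w = 1 ∧ 0 < a ∧ 4 * c < a)) :
    (!![1, w; 0, -1] : Matrix (Fin 2) (Fin 2) ℤ)ᵀ * !![2*a, b; b, 2*c] * !![1, w; 0, -1] =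
      !![2*a, b; b, 2*c] := by
  have htr : (!![1, w; 0, -1] : Matrix (Fin 2) (Fin 2) ℤ)ᵀ = !![1, 0; w, -1] := by
    ext i j; fin_cases i <;> fin_cases j <;> rfl
  rw [htr]
  rcases hcase with ⟨hb, hw, _, _⟩ | ⟨hb, hw, _, _⟩ <;> subst hb <;> subst hw <;>
    · ext i j
      fin_cases i <;> fin_cases j <;>
        simp [Matrix.mul_apply, Fin.sum_univ_two] <;> ring

theorem AA_one (w : ℤ) :
    (!![1, w; 0, -1] : Matrix (Fin 2) (Fin 2) ℤ) * !![1, w; 0, -1] = 1 := by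
  ext i j
  fin_cases i <;> fin_cases j <;>
    simp [Matrix.mul_apply, Fin.sum_univ_two, Matrix.one_apply]

theorem goodA (a b c d w : ℤ) (ha : 0 < a) (hd : d = b^2-4*a*c) (hd0 : 0 < d)
    (hcase : (b = 0 ∧ w = 0 ∧ 0 < a ∧ c < 0) ∨ (b = a ∧ w = 1 ∧ 0 < a ∧ 4 * c < a)) :
    phi !![1, w; 0, -1] '' Cp a b d = Cp a b d ∧
      phi !![1, w; 0, -1] '' Cm a b d = Cm a b d := by
  have hAut := autA a b c w hcase
  have hAA := AA_one w
  rcases master a b c d ha hd hd0 !![1, w; 0, -1] !![1, w; 0, -1] hAut hAA hAA with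
    ⟨_, h1, h2⟩ | ⟨hneg, _, _⟩
  · exact ⟨h1, h2⟩
  · exfalso
    have e1 : (!![1, w; 0, -1] : Matrix (Fin 2) (Fin 2) ℤ) 0 0 = 1 := rfl
    have e2 : (!![1, w; 0, -1] : Matrix (Fin 2) (Fin 2) ℤ) 1 0 = 0 := rfl
    rw [e1, e2] at hneg
    omega

theorem good_mul (a b c d : ℤ) (M N : Matrix (Fin 2) (Fin 2) ℤ)
    (hM : Mᵀ * !![2*a, b; b, 2*c] * M = !![2*a, b; b, 2*c])
    (hN : Nᵀ * !![2*a, b; b, 2*c] * N = !![2*a, b; b, 2*c])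
    (hMp : phi M '' Cp a b d = Cp a b d) (hMm : phi M '' Cm a b d = Cm a b d)
    (hNp : phi N '' Cp a b d = Cp a b d) (hNm : phi N '' Cm a b d = Cm a b d) :
    ((M*N)ᵀ * !![2*a, b; b, 2*c] * (M*N) = !![2*a, b; b, 2*c]) ∧
      phi (M*N) '' Cp a b d = Cp a b d ∧ phi (M*N) '' Cm a b d = Cm a b d := by
  have hfun : phi (M*N) = phi M ∘ phi N := funext (phi_mul M N)
  refine ⟨?_, ?_, ?_⟩
  · have h1 : (M*N)ᵀ * !![2*a, b; b, 2*c] * (M*N) = Nᵀ * (Mᵀ * !![2*a, b; b, 2*c] * M) * N := by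
      rw [Matrix.transpose_mul]
      simp only [Matrix.mul_assoc]
    rw [h1, hM, hN]
  · rw [hfun, Set.image_comp, hNp, hMp]
  · rw [hfun, Set.image_comp, hNm, hMm]

theorem good_zpow (a b c d : ℤ) (ha : 0 < a) (hd : d = b^2-4*a*c) (hd0 : 0 < d)
    (u : Matrix.GeneralLinearGroup (Fin 2) ℤ)
    (hAut : (u : Matrix (Fin 2) (Fin 2) ℤ)ᵀ * !![2*a, b; b, 2*c] * (u : Matrix (Fin 2) (Fin 2) ℤ)
      = !![2*a, b; b, 2*c])
    (hCp : phi (u : Matrix (Fin 2) (Fin 2) ℤ) '' Cp a b d = Cp a b d)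
    (hCm : phi (u : Matrix (Fin 2) (Fin 2) ℤ) '' Cm a b d = Cm a b d) :
    ∀ k : ℤ, (((u^k : Matrix.GeneralLinearGroup (Fin 2) ℤ) : Matrix (Fin 2) (Fin 2) ℤ)ᵀ *
        !![2*a, b; b, 2*c] * ((u^k : Matrix.GeneralLinearGroup (Fin 2) ℤ) :
          Matrix (Fin 2) (Fin 2) ℤ) = !![2*a, b; b, 2*c]) ∧
      phi ((u^k : Matrix.GeneralLinearGroup (Fin 2) ℤ) : Matrix (Fin 2) (Fin 2) ℤ) '' Cp a b d
        = Cp a b d ∧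
      phi ((u^k : Matrix.GeneralLinearGroup (Fin 2) ℤ) : Matrix (Fin 2) (Fin 2) ℤ) '' Cm a b d
        = Cm a b d := by
  have huv : ((u : Matrix (Fin 2) (Fin 2) ℤ)) * ((u⁻¹ : Matrix.GeneralLinearGroup (Fin 2) ℤ) :
      Matrix (Fin 2) (Fin 2) ℤ) = 1 := by
    rw [← Units.val_mul]; simp
  have hvu : ((u⁻¹ : Matrix.GeneralLinearGroup (Fin 2) ℤ) : Matrix (Fin 2) (Fin 2) ℤ) *
      ((u : Matrix (Fin 2) (Fin 2) ℤ)) = 1 := by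
    rw [← Units.val_mul]; simp
  have hAutInv := aut_of_inv a b c _ _ hAut huv
  -- u⁻¹ preserves the components
  have hInv : phi ((u⁻¹ : Matrix.GeneralLinearGroup (Fin 2) ℤ) : Matrix (Fin 2) (Fin 2) ℤ) ''
        Cp a b d = Cp a b d ∧
      phi ((u⁻¹ : Matrix.GeneralLinearGroup (Fin 2) ℤ) : Matrix (Fin 2) (Fin 2) ℤ) ''
        Cm a b d = Cm a b d := by
    rcases master a b c d ha hd hd0 _ _ hAutInv hvu huv with ⟨_, h1, h2⟩ | ⟨_, h1, h2⟩
    · exact ⟨h1, h2⟩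
    · exfalso
      apply CpneCm a b d ha
      have hfun : phi (((u : Matrix (Fin 2) (Fin 2) ℤ)) *
          ((u⁻¹ : Matrix.GeneralLinearGroup (Fin 2) ℤ) : Matrix (Fin 2) (Fin 2) ℤ)) =
          phi ((u : Matrix (Fin 2) (Fin 2) ℤ)) ∘
          phi ((u⁻¹ : Matrix.GeneralLinearGroup (Fin 2) ℤ) : Matrix (Fin 2) (Fin 2) ℤ) :=
        funext (phi_mul _ _)
      have : Cp a b d = phi ((u : Matrix (Fin 2) (Fin 2) ℤ)) ''
          (phi ((u⁻¹ : Matrix.GeneralLinearGroup (Fin 2) ℤ) : Matrix (Fin 2) (Fin 2) ℤ) ''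
            Cp a b d) := by
        rw [← Set.image_comp, ← hfun, huv]
        have : ∀ x, phi (1 : Matrix (Fin 2) (Fin 2) ℤ) x = x := phi_one
        rw [funext this]
        simp
      rw [h1, hCm] at this
      exact this
  intro k
  induction k using Int.induction_on with
  | zero =>
    constructor
    · simp only [zpow_zero, Units.val_one]
      ext i j
      fin_cases i <;> fin_cases j <;> simp [Matrix.mul_apply, Fin.sum_univ_two, Matrix.one_apply]
    constructor <;>
    · simp only [zpow_zero, Units.val_one]
      have : ∀ x, phi (1 : Matrix (Fin 2) (Fin 2) ℤ) x = x := phi_one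
      rw [funext this]
      simp
  | succ k ihk =>
    obtain ⟨h1, h2, h3⟩ := ihk
    have := good_mul a b c d _ _ h1 hAut h2 h3 hCp hCm
    rw [← Units.val_mul, ← _root_.zpow_add_one] at this
    exact_mod_cast this
  | pred k ihk =>
    obtain ⟨h1, h2, h3⟩ := ihk
    have := good_mul a b c d _ _ h1 hAutInv h2 h3 hInv.1 hInv.2
    rw [← Units.val_mul, ← _root_.zpow_sub_one] at this
    exact_mod_cast this

end Glue

open Matrix

set_option maxHeartbeats 1600000 in
theorem ambiguous_involution_is_orthochronous
    (a b c w : ℤ)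
    (hcase : (b = 0 ∧ w = 0 ∧ 0 < a ∧ c < 0) ∨
             (b = a ∧ w = 1 ∧ 0 < a ∧ 4 * c < a))
    (d : ℤ) (hd : d = b ^ 2 - 4 * a * c)
    (G : Matrix (Fin 2) (Fin 2) ℤ) (hG : G = !![2 * a, b; b, 2 * c])
    (A : Matrix (Fin 2) (Fin 2) ℤ) (hA : A = !![1, w; 0, -1])
    (lightCone : Set (Fin 2 → ℝ))
    (hlc : lightCone =
      {v : Fin 2 → ℝ | 0 < v ⬝ᵥ ((G.map (Int.cast : ℤ → ℝ)).mulVec v)}) :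
    (A.det = -1 ∧ Aᵀ * G * A = G) ∧
    (∀ v ∈ lightCone,
      (A.map (Int.cast : ℤ → ℝ)).mulVec '' connectedComponentIn lightCone v =
        connectedComponentIn lightCone v) ∧
    (Int.gcd a (Int.gcd b c) = 1 → (¬ ∃ m : ℤ, m * m = d) →
      ∀ U V : ℤ, 0 < U → 0 < V → U ^ 2 - d * V ^ 2 = 4 →
        (∀ x y : ℤ, 0 < x → 0 < y → x ^ 2 - d * y ^ 2 = 4 → U ≤ x) →
        ∀ u : Matrix.GeneralLinearGroup (Fin 2) ℤ,
          (u : Matrix (Fin 2) (Fin 2) ℤ) =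
            !![(U - b * V) / 2, -c * V; a * V, (U + b * V) / 2] →
        ∀ C : Set (Fin 2 → ℝ), (∃ v ∈ lightCone, C = connectedComponentIn lightCone v) →
        ∀ M : Matrix (Fin 2) (Fin 2) ℤ,
          ((M.det = 1 ∨ M.det = -1) ∧ Mᵀ * G * M = G ∧
              (M.map (Int.cast : ℤ → ℝ)).mulVec '' C = C) ↔
            ∃ k : ℤ,
              M = ((u ^ k : Matrix.GeneralLinearGroup (Fin 2) ℤ) :
                Matrix (Fin 2) (Fin 2) ℤ) ∨
              M = A * ((u ^ k : Matrix.GeneralLinearGroup (Fin 2) ℤ) :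
                Matrix (Fin 2) (Fin 2) ℤ)) := by
  have ha : 0 < a := by rcases hcase with ⟨_,_,h,_⟩|⟨_,_,h,_⟩ <;> exact h
  have hd0 : 0 < d := by
    rcases hcase with ⟨hb,_,h1,h2⟩|⟨hb,_,h1,h2⟩ <;> subst hb <;> rw [hd] <;> nlinarith
  subst hG
  subst hA
  have hlc2 : lightCone = LC a b c := by rw [hlc]; rfl
  have hdA : (!![1, w; 0, -1] : Matrix (Fin 2) (Fin 2) ℤ).det = -1 := by
    rw [Matrix.det_fin_two_of]; ring
  refine ⟨⟨hdA, autA a b c w hcase⟩, ?_, ?_⟩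
  · -- part 2
    intro v hv
    rw [hlc2] at hv ⊢
    rw [lc_eq_union a b c d ha hd hd0] at hv
    rcases hv with hv | hv
    · rw [comp_eq_Cp a b c d ha hd hd0 v hv]
      exact (goodA a b c d w ha hd hd0 hcase).1
    · rw [comp_eq_Cm a b c d ha hd hd0 v hv]
      exact (goodA a b c d w ha hd hd0 hcase).2
  · -- part 3
    intro hprim _hnonsq U V hU hV hPell hmin u hu C hC M
    -- parity
    have hprod : (U - b*V)*(U + b*V) = 2*(2 - 2*(a*c*V^2)) := by
      linear_combination hPell + V^2 * hd
    have hpar : 2 ∣ (U - b*V) := by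
      have hev : Even ((U - b*V)*(U + b*V)) := ⟨2 - 2*(a*c*V^2), by linarith⟩
      rcases Int.even_mul.mp hev with h | h
      · exact h.two_dvd
      · obtain ⟨r, hr⟩ := h
        exact ⟨r - b*V, by linarith⟩
    obtain ⟨P, hP⟩ := hpar
    have hdiv1 : (U - b*V)/2 = P := by
      rw [hP]; exact Int.mul_ediv_cancel_left P two_ne_zero
    have hdiv2 : (U + b*V)/2 = P + b*V := by
      have h2 : U + b*V = 2*(P + b*V) := by linarith
      rw [h2]; exact Int.mul_ediv_cancel_left _ two_ne_zero
    have hu' : (u : Matrix (Fin 2) (Fin 2) ℤ) = mOf a b c P V := by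
      rw [hu, hdiv1, hdiv2]; rfl
    have hDP : P^2 + b*P*V + a*c*V^2 = 1 := by
      have h4 : 4*(P^2 + b*P*V + a*c*V^2) = 4 := by
        linear_combination (2*P + U + b*V) * hP.symm + hPell + V^2 * hd
      linarith
    have hU2 : 2*P + b*V = U := by linarith
    have hUpos' : 0 < 2*P + b*V := by rw [hU2]; exact hU
    have hmin' : ∀ x y : ℤ, 0 < x → 0 < y → x^2 - d*y^2 = 4 → 2*P + b*V ≤ x := by
      intro x y hx hy hp; rw [hU2]; exact hmin x y hx hy hp
    -- the component C
    obtain ⟨v, hvlc, hCdef⟩ := hC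
    rw [hlc2] at hvlc hCdef
    have hCor : C = Cp a b d ∨ C = Cm a b d := by
      rw [lc_eq_union a b c d ha hd hd0] at hvlc
      rcases hvlc with h | h
      · exact Or.inl (by rw [hCdef, comp_eq_Cp a b c d ha hd hd0 v h])
      · exact Or.inr (by rw [hCdef, comp_eq_Cm a b c d ha hd hd0 v h])
    -- u is a good automorph
    have hAutU : (u : Matrix (Fin 2) (Fin 2) ℤ)ᵀ * !![2 * a, b; b, 2 * c] *
        (u : Matrix (Fin 2) (Fin 2) ℤ) = !![2 * a, b; b, 2 * c] := by
      rw [hu']; exact mOf_aut a b c P V hDP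
    have huv : ((u : Matrix (Fin 2) (Fin 2) ℤ)) *
        ((u⁻¹ : Matrix.GeneralLinearGroup (Fin 2) ℤ) : Matrix (Fin 2) (Fin 2) ℤ) = 1 := by
      rw [← Units.val_mul]; simp
    have hvu : ((u⁻¹ : Matrix.GeneralLinearGroup (Fin 2) ℤ) : Matrix (Fin 2) (Fin 2) ℤ) *
        ((u : Matrix (Fin 2) (Fin 2) ℤ)) = 1 := by
      rw [← Units.val_mul]; simp
    have hLu : 0 < 2*a*((u : Matrix (Fin 2) (Fin 2) ℤ) 0 0) +
        b*((u : Matrix (Fin 2) (Fin 2) ℤ) 1 0) := by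
      have e1 : (u : Matrix (Fin 2) (Fin 2) ℤ) 0 0 = P := by rw [hu']; rfl
      have e2 : (u : Matrix (Fin 2) (Fin 2) ℤ) 1 0 = a*V := by rw [hu']; rfl
      rw [e1, e2]
      have : 2*a*P + b*(a*V) = a*U := by rw [← hU2]; ring
      rw [this]
      exact mul_pos ha hU
    obtain ⟨hCpU, hCmU⟩ : phi (u : Matrix (Fin 2) (Fin 2) ℤ) '' Cp a b d = Cp a b d ∧
        phi (u : Matrix (Fin 2) (Fin 2) ℤ) '' Cm a b d = Cm a b d := by
      rcases master a b c d ha hd hd0 _ _ hAutU huv hvu with ⟨_, h1, h2⟩ | ⟨hneg, _, _⟩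
      · exact ⟨h1, h2⟩
      · exact absurd hLu (by omega)
    have hgood := good_zpow a b c d ha hd hd0 u hAutU hCpU hCmU
    constructor
    · rintro ⟨hdet, hAutM, himg⟩
      obtain ⟨N, hMN, hNM⟩ : ∃ N, M * N = 1 ∧ N * M = 1 := by
        rcases hdet with h1 | h1
        · exact ⟨M.adjugate, by rw [Matrix.mul_adjugate, h1, one_smul],
            by rw [Matrix.adjugate_mul, h1, one_smul]⟩
        · refine ⟨-M.adjugate, ?_, ?_⟩
          · rw [Matrix.mul_neg, Matrix.mul_adjugate, h1]
            simp
          · rw [Matrix.neg_mul, Matrix.adjugate_mul, h1]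
            simp
      rcases master a b c d ha hd hd0 M N hAutM hMN hNM with
        ⟨hLpos, hMCp, hMCm⟩ | ⟨_, hMCp, hMCm⟩
      swap
      · exfalso
        rcases hCor with rfl | rfl
        · exact CpneCm a b d ha (himg.symm.trans hMCp)
        · exact CpneCm a b d ha (himg.symm.trans hMCm).symm
      rcases hdet with h1 | h1
      · obtain ⟨mm, vv, hshape, hDmv⟩ := aut_shape a b c ha hprim M hAutM h1
        have e00 : M 0 0 = mm := by rw [hshape]; rfl
        have e10 : M 1 0 = a*vv := by rw [hshape]; rfl
        rw [e00, e10] at hLpos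
        have htpos : 0 < 2*mm + b*vv := by nlinarith
        obtain ⟨k, hk⟩ := descent a b c d ha hd hd0 P V hV hDP hUpos' hmin' u hu'
          mm vv hDmv htpos
        exact ⟨k, Or.inl (hshape.trans hk)⟩
      · -- det M = -1
        obtain ⟨M2, hM2⟩ : ∃ M2 : Matrix (Fin 2) (Fin 2) ℤ, M2 = !![1, w; 0, -1] * M := ⟨_, rfl⟩
        have hdet2 : M2.det = 1 := by
          rw [hM2, Matrix.det_mul, hdA, h1]; ring
        have hAut2 : M2ᵀ * !![2 * a, b; b, 2 * c] * M2 = !![2 * a, b; b, 2 * c] := by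
          have h1' : M2ᵀ * !![2 * a, b; b, 2 * c] * M2 =
              Mᵀ * ((!![1, w; 0, -1] : Matrix (Fin 2) (Fin 2) ℤ)ᵀ *
                !![2 * a, b; b, 2 * c] * !![1, w; 0, -1]) * M := by
            rw [hM2, Matrix.transpose_mul]
            simp only [Matrix.mul_assoc]
          rw [h1', autA a b c w hcase, hAutM]
        have f1 : M2 0 0 = M 0 0 + w * M 1 0 := by
          rw [hM2, Matrix.mul_apply, Fin.sum_univ_two]
          norm_num
        have f2 : M2 1 0 = -(M 1 0) := by
          rw [hM2, Matrix.mul_apply, Fin.sum_univ_two]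
          norm_num
        have hL2 : 0 < 2*a*(M2 0 0) + b*(M2 1 0) := by
          rw [f1, f2]
          rcases hcase with ⟨hb, hw, _, _⟩ | ⟨hb, hw, _, _⟩ <;> subst hb <;> subst hw <;>
            nlinarith [hLpos]
        obtain ⟨mm, vv, hshape, hDmv⟩ := aut_shape a b c ha hprim M2 hAut2 hdet2
        have e00 : M2 0 0 = mm := by rw [hshape]; rfl
        have e10 : M2 1 0 = a*vv := by rw [hshape]; rfl
        rw [e00, e10] at hL2
        have htpos : 0 < 2*mm + b*vv := by nlinarith
        obtain ⟨k, hk⟩ := descent a b c d ha hd hd0 P V hV hDP hUpos' hmin' u hu'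
          mm vv hDmv htpos
        have hAM : !![1, w; 0, -1] * M2 = M := by
          rw [hM2, ← Matrix.mul_assoc, AA_one, one_mul]
        exact ⟨k, Or.inr (by rw [← hAM, hshape.trans hk])⟩
    · rintro ⟨k, hMk | hMk⟩ <;> obtain ⟨hAutk, hkCp, hkCm⟩ := hgood k <;>
        have hdetk : ((u^k : Matrix.GeneralLinearGroup (Fin 2) ℤ) :
            Matrix (Fin 2) (Fin 2) ℤ).det = 1 ∨
            ((u^k : Matrix.GeneralLinearGroup (Fin 2) ℤ) :
            Matrix (Fin 2) (Fin 2) ℤ).det = -1 :=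
          Int.isUnit_iff.mp ((Matrix.isUnit_iff_isUnit_det _).mp (u^k).isUnit)
      · refine ⟨by rw [hMk]; exact hdetk, by rw [hMk]; exact hAutk, ?_⟩
        rcases hCor with rfl | rfl
        · rw [hMk]; exact hkCp
        · rw [hMk]; exact hkCm
      · obtain ⟨hAutAk, hACp, hACm⟩ := good_mul a b c d _ _ (autA a b c w hcase) hAutk
          (goodA a b c d w ha hd hd0 hcase).1 (goodA a b c d w ha hd hd0 hcase).2 hkCp hkCm
        refine ⟨?_, by rw [hMk]; exact hAutAk, ?_⟩
        · rw [hMk, Matrix.det_mul, hdA]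
          rcases hdetk with h | h <;> rw [h]
          · exact Or.inr (by ring)
          · exact Or.inl (by ring)
        · rcases hCor with rfl | rfl
          · rw [hMk]; exact hACp
          · rw [hMk]; exact hACm
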